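/- arXiv:1504.05718 — 5 statements merged into one kernel-verified Lean document; each statement's English description precedes it below -/
import Mathlib

section
/- Let n ≥ 2 and m be integers with n ≤ 2^m. Then u_1, u_2, …, u_n are pairwise incongruent modulo 2^m. -/
/-- The Salajan sequence: `u j = (3^j - 5*(-1)^j)/4`. -/
def salajanU (j : ℕ) : ℤ := ((3 : ℤ) ^ j - 5 * (-1) ^ j) / 4

lemma salajan_four_dvd (j : ℕ) : (4 : ℤ) ∣ (3 : ℤ) ^ j - 5 * (-1) ^ j := by
  have h : (3 : ℤ) ^ j ≡ (-1) ^ j [ZMOD 4] := Int.ModEq.pow j (by decide)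
  have h2 : (4 : ℤ) ∣ (3 : ℤ) ^ j - (-1) ^ j := Int.ModEq.dvd h.symm
  have h3 : (3:ℤ)^j - 5*(-1)^j = ((3:ℤ)^j - (-1)^j) + 4 * (-(-1)^j) := by ring
  rw [h3]
  exact dvd_add h2 ⟨-(-1)^j, rfl⟩

lemma salajan_four_mul (j : ℕ) : 4 * salajanU j = (3 : ℤ) ^ j - 5 * (-1) ^ j := by
  unfold salajanU
  exact Int.mul_ediv_cancel' (salajan_four_dvd j)

lemma three_pow_mod8_even {k : ℕ} (hk : Even k) : (3 : ℤ) ^ k ≡ 1 [ZMOD 8] := by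
  obtain ⟨a, ha⟩ := hk
  subst ha
  calc (3:ℤ)^(a+a) = 9^a := by rw [← two_mul, pow_mul]; norm_num
  _ ≡ 1^a [ZMOD 8] := Int.ModEq.pow a (by decide)
  _ = 1 := one_pow a

lemma three_pow_mod8_odd {k : ℕ} (hk : Odd k) : (3 : ℤ) ^ k ≡ 3 [ZMOD 8] := by
  obtain ⟨a, ha⟩ := hk
  subst ha
  calc (3:ℤ)^(2*a+1) = 9^a * 3 := by rw [pow_add, pow_mul]; norm_num
  _ ≡ 1^a * 3 [ZMOD 8] := Int.ModEq.mul_right 3 (Int.ModEq.pow a (by decide))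
  _ = 3 := by ring

/-- order lemma: if `2^(m+2) ∣ 3^d - 1` with `d` even then `2^m ∣ d`. -/
lemma ord_lemma (m d : ℕ) (he : Even d) (hdvd : (2:ℤ)^(m+2) ∣ (3:ℤ)^d - 1) :
    2 ^ m ∣ d := by
  have hlte := Int.two_pow_sub_pow (x := 3) (y := 1) (by norm_num) (by norm_num) he
  simp only [one_pow] at hlte
  have h4 : emultiplicity (2:ℤ) ((3:ℤ) + 1) = (2 : ℕ) := by
    rw [emultiplicity_eq_coe]; norm_num
  have h2 : emultiplicity (2:ℤ) ((3:ℤ) - 1) = (1 : ℕ) := by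
    rw [emultiplicity_eq_coe]; norm_num
  rw [h4, h2] at hlte
  have hm2 : ((m + 2 : ℕ) : ℕ∞) ≤ emultiplicity (2:ℤ) ((3:ℤ)^d - 1) :=
    le_emultiplicity_of_pow_dvd hdvd
  have hmd : (m : ℕ∞) ≤ emultiplicity (2:ℤ) (d : ℤ) := by
    rcases eq_or_ne (emultiplicity (2:ℤ) (d:ℤ)) ⊤ with h | h
    · rw [h]; exact le_top
    · lift emultiplicity (2:ℤ) (d:ℤ) to ℕ using h with k hk
      rcases eq_or_ne (emultiplicity (2:ℤ) ((3:ℤ)^d - 1)) ⊤ with hE | hE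
      · rw [hE] at hlte
        exfalso
        have : ((2:ℕ):ℕ∞) + (1:ℕ) + (k:ℕ) ≠ ⊤ := by
          exact_mod_cast (ENat.coe_ne_top (2 + 1 + k))
        rw [← hlte] at this
        simp at this
      · lift emultiplicity (2:ℤ) ((3:ℤ)^d - 1) to ℕ using hE with E hEe
        have h1 : E + 1 = 2 + 1 + k := by exact_mod_cast hlte
        have h2' : m + 2 ≤ E := by exact_mod_cast hm2
        exact_mod_cast Nat.cast_le.mpr (by omega : m ≤ k)
  have hz : (2:ℤ)^m ∣ (d : ℤ) := pow_dvd_of_le_emultiplicity hmd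
  have hz2 : ((2^m : ℕ) : ℤ) ∣ (d : ℤ) := by push_cast; exact hz
  exact_mod_cast hz2

theorem salajan_distinct_mod_two_pow (n : ℕ) (m : ℕ) (hn : 2 ≤ n) (hnm : n ≤ 2 ^ m) :
    ∀ i j : ℕ, 1 ≤ i → i < j → j ≤ n →
      ¬ (salajanU i ≡ salajanU j [ZMOD (2 : ℤ) ^ m]) := by
  intro i j hi hij hjn h
  have hm : 1 ≤ m := by
    by_contra hm
    interval_cases m
    · omega
  have hdvd0 : (2:ℤ)^m ∣ salajanU j - salajanU i := Int.ModEq.dvd h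
  have hdvd : (2:ℤ)^(m+2) ∣ ((3:ℤ)^j - 5*(-1)^j) - ((3:ℤ)^i - 5*(-1)^i) := by
    obtain ⟨c, hc⟩ := hdvd0
    refine ⟨c, ?_⟩
    rw [← salajan_four_mul, ← salajan_four_mul, pow_add]
    calc 4 * salajanU j - 4 * salajanU i = 4 * (salajanU j - salajanU i) := by ring
    _ = 4 * ((2:ℤ)^m * c) := by rw [hc]
    _ = 2^m * 2^2 * c := by ring
  set d := j - i with hd
  have hji : j = i + d := by omega
  have hdpos : 0 < d := by omega
  rcases Nat.even_or_odd d with hde | hdo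
  · -- same parity case
    have hneg : ((-1:ℤ))^j = (-1)^i := by
      rw [hji, pow_add, hde.neg_one_pow, mul_one]
    rw [hneg] at hdvd
    have h3 : (2:ℤ)^(m+2) ∣ (3:ℤ)^i * ((3:ℤ)^d - 1) := by
      have he : ((3:ℤ)^j - 5*(-1)^i) - ((3:ℤ)^i - 5*(-1)^i) = (3:ℤ)^i * ((3:ℤ)^d - 1) := by
        rw [hji, pow_add]; ring
      rwa [he] at hdvd
    have hcop : IsCoprime ((2:ℤ)^(m+2)) ((3:ℤ)^i) := by
      apply IsCoprime.pow
      exact Int.isCoprime_iff_gcd_eq_one.mpr rfl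
    have h5 : (2:ℤ)^(m+2) ∣ (3:ℤ)^d - 1 := hcop.dvd_of_dvd_mul_left h3
    have h6 : 2^m ∣ d := ord_lemma m d hde h5
    have : 2^m ≤ d := Nat.le_of_dvd hdpos h6
    omega
  · -- opposite parity case: contradiction mod 8
    have hneg : ((-1:ℤ))^j = -(-1)^i := by
      rw [hji, pow_add, hdo.neg_one_pow]; ring
    rw [hneg] at hdvd
    have h8 : (8:ℤ) ∣ ((3:ℤ)^j - 5*(-(-1)^i)) - ((3:ℤ)^i - 5*(-1)^i) := by
      refine dvd_trans ?_ hdvd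
      have h83 : (8:ℤ) = 2^3 := by norm_num
      rw [h83]
      exact pow_dvd_pow 2 (by omega)
    have hX : ((3:ℤ)^j - 5*(-(-1)^i)) - ((3:ℤ)^i - 5*(-1)^i) ≡ 0 [ZMOD 8] :=
      (Int.modEq_zero_iff_dvd).mpr h8
    rcases Nat.even_or_odd i with hie | hio
    · have hjo : Odd j := by rw [hji]; exact hie.add_odd hdo
      have hmi := three_pow_mod8_even hie
      have hmj := three_pow_mod8_odd hjo
      have hc : ((3:ℤ)^j - 5*(-(-1)^i)) - ((3:ℤ)^i - 5*(-1)^i) ≡ (3 - 5*(-(-1)^i)) - (1 - 5*(-1)^i) [ZMOD 8] :=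
        Int.ModEq.sub (Int.ModEq.sub hmj (Int.ModEq.refl _)) (Int.ModEq.sub hmi (Int.ModEq.refl _))
      have h0 : (3 - 5*(-(-1:ℤ)^i)) - (1 - 5*(-1)^i) ≡ 0 [ZMOD 8] := hc.symm.trans hX
      rw [hie.neg_one_pow] at h0
      norm_num at h0
    · have hje : Even j := by rw [hji]; exact hio.add_odd hdo
      have hmi := three_pow_mod8_odd hio
      have hmj := three_pow_mod8_even hje
      have hc : ((3:ℤ)^j - 5*(-(-1)^i)) - ((3:ℤ)^i - 5*(-1)^i) ≡ (1 - 5*(-(-1)^i)) - (3 - 5*(-1)^i) [ZMOD 8] :=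
        Int.ModEq.sub (Int.ModEq.sub hmj (Int.ModEq.refl _)) (Int.ModEq.sub hmi (Int.ModEq.refl _))
      have h0 : (1 - 5*(-(-1:ℤ)^i)) - (3 - 5*(-1)^i) ≡ 0 [ZMOD 8] := hc.symm.trans hX
      rw [hio.neg_one_pow] at h0
      norm_num at h0
end

section
/- Let m be a positive integer not divisible by 3, and let 1 ≤ α ≤ n. Then u_i ≢ u_j (mod m) for every pair (i, j) with α ≤ i < j ≤ n and i ≡ j (mod 2), if and only if the multiplicative order of 9 modulo 4m exceeds (n − α)/2. -/
lemma salajanU_mul_four (j : ℕ) : (4 : ℤ) * salajanU j = 3 ^ j - 5 * (-1) ^ j := by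
  have hdvd : (4 : ℤ) ∣ 3 ^ j - 5 * (-1) ^ j := by
    have h1 : ((3 : ℤ)) ^ j ≡ (-1) ^ j [ZMOD 4] := Int.ModEq.pow j (by decide)
    have h2 : (3 : ℤ) ^ j - 5 * (-1) ^ j ≡ (-1) ^ j - 5 * (-1) ^ j [ZMOD 4] :=
      h1.sub (Int.ModEq.refl _)
    have h3 : (-1 : ℤ) ^ j - 5 * (-1) ^ j ≡ 0 [ZMOD 4] :=
      (Int.modEq_zero_iff_dvd).mpr ⟨-(-1) ^ j, by ring⟩
    exact (Int.modEq_zero_iff_dvd).mp (h2.trans h3)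
  exact Int.mul_ediv_cancel' hdvd

theorem salajan_same_parity_incongruent_iff (m : ℕ) (hm : 0 < m) (h3 : ¬ 3 ∣ m)
    (α n : ℕ) (hα : 1 ≤ α) (hαn : α ≤ n) :
    (∀ i j : ℕ, α ≤ i → i < j → j ≤ n → i % 2 = j % 2 →
      ¬ (salajanU i ≡ salajanU j [ZMOD (m : ℤ)])) ↔
    n - α < 2 * orderOf (9 : ZMod (4 * m)) := by
  haveI : NeZero (4 * m) := ⟨by omega⟩
  have hcop3 : Nat.Coprime 3 (4 * m) :=
    Nat.Coprime.mul_right (by decide) (Nat.prime_three.coprime_iff_not_dvd.mpr h3)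
  have hu3 : IsUnit (3 : ZMod (4 * m)) := by
    have := (ZMod.isUnit_iff_coprime 3 (4 * m)).mpr hcop3
    simpa using this
  have key : ∀ i k : ℕ,
      (salajanU i ≡ salajanU (i + 2 * k) [ZMOD (m : ℤ)] ↔ (9 : ZMod (4 * m)) ^ k = 1) := by
    intro i k
    rw [Int.modEq_iff_dvd]
    have e1 : ((m : ℤ) ∣ salajanU (i + 2 * k) - salajanU i) ↔
        ((4 : ℤ) * m ∣ 4 * (salajanU (i + 2 * k) - salajanU i)) :=
      (mul_dvd_mul_iff_left (by norm_num : (4 : ℤ) ≠ 0)).symm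
    rw [e1]
    have e2 : (4 : ℤ) * (salajanU (i + 2 * k) - salajanU i) = 3 ^ i * (9 ^ k - 1) := by
      rw [mul_sub, salajanU_mul_four, salajanU_mul_four]
      rw [pow_add, pow_add, pow_mul, pow_mul]
      ring
    rw [e2]
    have e3 : ((4 : ℤ) * m ∣ 3 ^ i * (9 ^ k - 1)) ↔
        (((3 ^ i * (9 ^ k - 1) : ℤ) : ZMod (4 * m)) = 0) := by
      rw [ZMod.intCast_zmod_eq_zero_iff_dvd]
      push_cast
      rfl
    rw [e3]
    push_cast
    rw [(hu3.pow i).mul_right_eq_zero, sub_eq_zero, eq_comm]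
  have hordpos : 0 < orderOf (9 : ZMod (4 * m)) := by
    have hu9 : IsUnit (9 : ZMod (4 * m)) := by
      have : (9 : ZMod (4 * m)) = 3 ^ 2 := by norm_num
      rw [this]; exact hu3.pow 2
    obtain ⟨u, hu⟩ := hu9
    rw [← hu, orderOf_units]
    exact orderOf_pos u
  constructor
  · intro H
    by_contra hlt
    push_neg at hlt
    exact H α (α + 2 * orderOf (9 : ZMod (4 * m))) le_rfl (by omega) (by omega) (by omega)
      ((key α _).mpr (pow_orderOf_eq_one _))
  · intro hlt i j hi hij hj hpar hcong
    obtain ⟨k, hk⟩ : ∃ k, j = i + 2 * k := ⟨(j - i) / 2, by omega⟩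
    subst hk
    have h1 : (9 : ZMod (4 * m)) ^ k = 1 := (key i k).mp hcong
    have h2 : orderOf (9 : ZMod (4 * m)) ≤ k :=
      Nat.le_of_dvd (by omega) (orderOf_dvd_of_pow_eq_one h1)
    omega
end

section
/- Let d > 1 with 9 ∤ d and write d = 3^α·δ with gcd(δ,3)=1. Then the period ρ(d) = 2·ord_9(4δ) of the Salajan sequence modulo d is even, and ρ(2^e) = 2^e for every e ≥ 1, ρ(3) = 2, and ρ(p^e) divides φ(p^e) for every odd prime p. -/
/-- The (eventual) minimal period of the Salajan sequence modulo `d`. -/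
noncomputable def salajanRho (d : ℕ) : ℕ :=
  sInf {k : ℕ | 0 < k ∧ ∃ n0 : ℕ,
    ∀ n : ℕ, n0 ≤ n → salajanU n ≡ salajanU (n + k) [ZMOD (d : ℤ)]}


instance fact5 : Fact (Nat.Prime 5) := ⟨by norm_num⟩


lemma four_dvd_num (j : ℕ) : (4:ℤ) ∣ (3:ℤ)^j - 5 * (-1)^j := by
  have h : (3:ℤ)^j ≡ (-1:ℤ)^j [ZMOD 4] := Int.ModEq.pow j (by decide)
  obtain ⟨c, hc⟩ := Int.ModEq.dvd h
  exact ⟨-c - (-1)^j, by linarith⟩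

lemma four_mul_u (j : ℕ) : 4 * salajanU j = (3:ℤ)^j - 5 * (-1)^j := by
  unfold salajanU
  rw [mul_comm]
  exact Int.ediv_mul_cancel (four_dvd_num j)

lemma key_diff (n k : ℕ) :
    4 * (salajanU (n+k) - salajanU n)
      = (3:ℤ)^n * (3^k - 1) - 5 * (-1)^n * ((-1)^k - 1) := by
  have h1 := four_mul_u (n+k)
  have h2 := four_mul_u n
  have : (3:ℤ)^(n+k) = 3^n * 3^k := pow_add 3 n k
  have : ((-1):ℤ)^(n+k) = (-1)^n * (-1)^k := pow_add (-1) n k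
  rw [mul_sub, h1, h2, pow_add, pow_add]
  ring


lemma rho_eq (d : ℕ) (hd : 1 < d) (α δ : ℕ) (hδ : ¬ 3 ∣ δ) (hfact : d = 3 ^ α * δ) :
    salajanRho d = 2 * orderOf (9 : ZMod (4 * δ)) := by
  have hδ0 : 0 < δ := Nat.pos_of_ne_zero (fun h => hδ (h ▸ dvd_zero 3))
  have h34 : ¬ (3 ∣ 4 * δ) := by
    intro h
    rcases (Nat.Prime.dvd_mul (by norm_num)).mp h with h' | h'
    · omega
    · exact hδ h'
  have hcop3 : Nat.Coprime 3 (4 * δ) :=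
    (Nat.Prime.coprime_iff_not_dvd (by norm_num)).mpr h34
  have hcop9 : Nat.Coprime 9 (4 * δ) := by
    have := Nat.Coprime.pow_left 2 hcop3
    norm_num at this ⊢
    exact this
  set r := orderOf (9 : ZMod (4 * δ)) with hr
  have hr1 : (9 : ZMod (4 * δ)) ^ r = 1 := pow_orderOf_eq_one _
  have heuler : (9 : ZMod (4 * δ)) ^ Nat.totient (4 * δ) = 1 := by
    have h := Nat.ModEq.pow_totient hcop9
    have h2 : ((9 ^ Nat.totient (4*δ) : ℕ) : ZMod (4 * δ)) = ((1:ℕ) : ZMod (4*δ)) :=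
      (ZMod.natCast_eq_natCast_iff _ _ _).mpr h
    push_cast at h2
    exact h2
  have hrpos : 0 < r := by
    rw [hr]
    rw [orderOf_pos_iff]
    exact isOfFinOrder_iff_pow_eq_one.mpr ⟨_, Nat.totient_pos.mpr (by omega), heuler⟩
  have h9r : ((4 * δ : ℕ) : ℤ) ∣ (9:ℤ) ^ r - 1 := by
    have h0 : (((9:ℤ) ^ r - 1 : ℤ) : ZMod (4 * δ)) = 0 := by
      push_cast
      rw [hr1]
      ring
    exact (ZMod.intCast_zmod_eq_zero_iff_dvd _ _).mp h0
  -- membership of 2r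
  have mem2r : (2 * r) ∈ {k : ℕ | 0 < k ∧ ∃ n0 : ℕ,
      ∀ n : ℕ, n0 ≤ n → salajanU n ≡ salajanU (n + k) [ZMOD (d : ℤ)]} := by
    refine ⟨by omega, α, fun n hn => ?_⟩
    rw [Int.modEq_iff_dvd]
    have hk : (4:ℤ) * (salajanU (n + 2*r) - salajanU n) = 3^n * ((9:ℤ)^r - 1) := by
      rw [key_diff]
      have h1 : ((-1:ℤ)) ^ (2*r) = 1 := by rw [pow_mul]; norm_num
      have h2 : (3:ℤ) ^ (2*r) = 9 ^ r := by rw [pow_mul]; norm_num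
      rw [h1, h2]; ring
    have hdvd : (4:ℤ) * (d:ℤ) ∣ (3:ℤ)^n * ((9:ℤ)^r - 1) := by
      have he : (4:ℤ) * (d:ℤ) = (3:ℤ)^α * ((4*δ : ℕ) : ℤ) := by
        push_cast [hfact]; ring
      rw [he]
      exact mul_dvd_mul (pow_dvd_pow 3 hn) h9r
    rw [← hk] at hdvd
    exact (mul_dvd_mul_iff_left (by norm_num : (4:ℤ) ≠ 0)).mp hdvd
  -- divisibility for any member
  have hdvd_of_mem : ∀ k n0 : ℕ, 0 < k →
      (∀ n : ℕ, n0 ≤ n → salajanU n ≡ salajanU (n + k) [ZMOD (d : ℤ)]) → 2 * r ∣ k := by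
    intro k n0 hk hper
    have hA : ∀ n : ℕ, n0 ≤ n →
        (4:ℤ) * (d:ℤ) ∣ (3:ℤ)^n * (3^k - 1) - 5 * (-1)^n * ((-1)^k - 1) := by
      intro n hn
      have h0 : (d:ℤ) ∣ salajanU (n + k) - salajanU n := Int.modEq_iff_dvd.mp (hper n hn)
      have h4 := mul_dvd_mul_left (4:ℤ) h0
      rwa [key_diff] at h4
    rcases Nat.even_or_odd k with hke | hko
    · -- even case
      obtain ⟨m, rfl⟩ : ∃ m, k = 2 * m := by
        obtain ⟨t, ht⟩ := hke; exact ⟨t, by omega⟩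
      have h0 := hA (n0 + α) (by omega)
      have heq : (3:ℤ)^(n0+α) * (3^(2*m) - 1) - 5 * (-1)^(n0+α) * ((-1)^(2*m) - 1)
          = 3^α * ((3:ℤ)^n0 * ((9:ℤ)^m - 1)) := by
        have h1 : ((-1:ℤ)) ^ (2*m) = 1 := by rw [pow_mul]; norm_num
        have h2 : (3:ℤ) ^ (2*m) = 9 ^ m := by rw [pow_mul]; norm_num
        rw [h1, h2, pow_add]; ring
      rw [heq] at h0
      have he : (4:ℤ) * (d:ℤ) = (3:ℤ)^α * ((4*δ : ℕ) : ℤ) := by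
        push_cast [hfact]; ring
      rw [he] at h0
      have h1 : ((4*δ : ℕ) : ℤ) ∣ (3:ℤ)^n0 * ((9:ℤ)^m - 1) :=
        (mul_dvd_mul_iff_left (pow_ne_zero α (by norm_num : (3:ℤ) ≠ 0))).mp h0
      have hic : IsCoprime ((4*δ : ℕ) : ℤ) ((3:ℤ)^n0) := by
        have : IsCoprime ((4*δ : ℕ) : ℤ) ((3:ℕ) : ℤ) :=
          Nat.isCoprime_iff_coprime.mpr hcop3.symm
        exact_mod_cast IsCoprime.pow_right this
      have h2 : ((4*δ : ℕ) : ℤ) ∣ (9:ℤ)^m - 1 := hic.dvd_of_dvd_mul_left h1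
      have h3 : (9 : ZMod (4*δ)) ^ m = 1 := by
        have h4 : (((9:ℤ)^m - 1 : ℤ) : ZMod (4*δ)) = 0 :=
          (ZMod.intCast_zmod_eq_zero_iff_dvd _ _).mpr h2
        push_cast at h4
        linear_combination h4
      have h5 : r ∣ m := orderOf_dvd_of_pow_eq_one h3
      exact mul_dvd_mul_left 2 h5
    · -- odd case : contradiction
      exfalso
      obtain ⟨m, rfl⟩ : ∃ m, k = 2 * m + 1 := hko
      have hB : ∀ n : ℕ, n0 ≤ n →
          (4:ℤ) * (d:ℤ) ∣ (3:ℤ)^n * (3^(2*m+1) - 1) + 10 * (-1)^n := by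
        intro n hn
        have h0 := hA n hn
        have h1 : ((-1:ℤ)) ^ (2*m+1) = -1 := Odd.neg_one_pow ⟨m, by ring⟩
        rw [h1] at h0
        convert h0 using 1
        ring
      have h0 := hB n0 le_rfl
      have h1 := hB (n0 + 1) (by omega)
      -- d ∣ 10
      have h40 : (4:ℤ) * (d:ℤ) ∣ 40 := by
        have hc : (4:ℤ) * (d:ℤ) ∣ 3 * ((3:ℤ)^n0 * (3^(2*m+1) - 1) + 10 * (-1)^n0)
            - ((3:ℤ)^(n0+1) * (3^(2*m+1) - 1) + 10 * (-1)^(n0+1)) :=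
          dvd_sub (Dvd.dvd.mul_left h0 3) h1
        have heq : 3 * ((3:ℤ)^n0 * (3^(2*m+1) - 1) + 10 * (-1)^n0)
            - ((3:ℤ)^(n0+1) * (3^(2*m+1) - 1) + 10 * (-1)^(n0+1))
            = 40 * (-1)^n0 := by
          rw [pow_succ, pow_succ]; ring
        rw [heq] at hc
        have hc2 := Dvd.dvd.mul_right hc ((-1:ℤ)^n0)
        have heq2 : 40 * (-1:ℤ)^n0 * (-1)^n0 = 40 := by
          rw [mul_assoc, ← pow_add]
          rw [Even.neg_one_pow ⟨n0, rfl⟩]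
          ring
        rwa [heq2] at hc2
      have hd10 : d ∣ 10 := by
        have : ((4*d : ℕ) : ℤ) ∣ ((40 : ℕ) : ℤ) := by push_cast; convert h40 using 1
        have h4d : (4*d) ∣ 40 := Int.natCast_dvd_natCast.mp this
        have : (4*d) ∣ 4*10 := by norm_num at h4d ⊢; exact h4d
        exact (mul_dvd_mul_iff_left (by norm_num : (4:ℕ) ≠ 0)).mp this
      -- d ∣ 3^n0 * (3^k - 1)
      have hsum : (d:ℤ) ∣ (3:ℤ)^n0 * (3^(2*m+1) - 1) := by
        have hc : (4:ℤ) * (d:ℤ) ∣ ((3:ℤ)^n0 * (3^(2*m+1) - 1) + 10 * (-1)^n0)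
            + ((3:ℤ)^(n0+1) * (3^(2*m+1) - 1) + 10 * (-1)^(n0+1)) := dvd_add h0 h1
        have heq : ((3:ℤ)^n0 * (3^(2*m+1) - 1) + 10 * (-1)^n0)
            + ((3:ℤ)^(n0+1) * (3^(2*m+1) - 1) + 10 * (-1)^(n0+1))
            = 4 * ((3:ℤ)^n0 * (3^(2*m+1) - 1)) := by
          rw [pow_succ, pow_succ]; ring
        rw [heq] at hc
        exact (mul_dvd_mul_iff_left (by norm_num : (4:ℤ) ≠ 0)).mp hc
      have h25 : 2 ∣ d ∨ 5 ∣ d := by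
        have hle : d ≤ 10 := Nat.le_of_dvd (by norm_num) hd10
        interval_cases d <;> revert hd10 <;> decide
      rcases h25 with h2d | h5d
      · -- 2 ∣ d : contradiction mod 8
        obtain ⟨c, hc⟩ := h2d
        have h8 : ((8:ℕ):ℤ) ∣ (3:ℤ)^(2*n0) * (3^(2*m+1) - 1) + 10 * (-1)^(2*n0) := by
          have hdv : ((8:ℕ):ℤ) ∣ (4:ℤ) * (d:ℤ) := ⟨c, by push_cast [hc]; ring⟩
          exact dvd_trans hdv (hB (2*n0) (by omega))
        have h0' : (((3:ℤ)^(2*n0) * (3^(2*m+1) - 1) + 10 * (-1)^(2*n0) : ℤ) : ZMod 8) = 0 :=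
          (ZMod.intCast_zmod_eq_zero_iff_dvd _ 8).mpr h8
        push_cast at h0'
        have e1 : (3 : ZMod 8) ^ (2 * n0) = 1 := by
          rw [pow_mul, (by decide : (3 : ZMod 8) ^ 2 = 1), one_pow]
        have e2 : (3 : ZMod 8) ^ (2 * m + 1) = 3 := by
          rw [pow_succ, pow_mul, (by decide : (3 : ZMod 8) ^ 2 = 1), one_pow, one_mul]
        have e3 : ((-1 : ZMod 8)) ^ (2 * n0) = 1 := by
          rw [pow_mul, (by decide : ((-1 : ZMod 8)) ^ 2 = 1), one_pow]
        rw [e1, e2, e3] at h0'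
        revert h0'
        decide
      · -- 5 ∣ d : contradiction mod 5
        have h5 : ((5:ℕ):ℤ) ∣ (3:ℤ)^n0 * (3^(2*m+1) - 1) := by
          obtain ⟨c, hc⟩ := h5d
          exact dvd_trans ⟨c, by push_cast [hc]; ring⟩ hsum
        have h0' : (((3:ℤ)^n0 * ((3:ℤ)^(2*m+1) - 1) : ℤ) : ZMod 5) = 0 :=
          (ZMod.intCast_zmod_eq_zero_iff_dvd _ 5).mpr h5
        push_cast at h0'
        have h3ne : (3 : ZMod 5) ≠ 0 := by decide
        rcases mul_eq_zero.mp h0' with hz | hz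
        · exact pow_ne_zero n0 h3ne hz
        · have h31 : (3 : ZMod 5) ^ (2 * m + 1) = 1 := by
            have hz' : (3 : ZMod 5) ^ (2 * m + 1) - 1 = 0 := hz
            linear_combination hz'
          rw [pow_succ, pow_mul, (by decide : (3 : ZMod 5) ^ 2 = -1)] at h31
          rcases Nat.even_or_odd m with hme | hmo
          · rw [Even.neg_one_pow hme] at h31
            exact absurd h31 (by decide)
          · rw [Odd.neg_one_pow hmo] at h31
            exact absurd h31 (by decide)
  -- conclude
  have hSne : {k : ℕ | 0 < k ∧ ∃ n0 : ℕ,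
      ∀ n : ℕ, n0 ≤ n → salajanU n ≡ salajanU (n + k) [ZMOD (d : ℤ)]}.Nonempty :=
    ⟨2*r, mem2r⟩
  have hmem := Nat.sInf_mem hSne
  obtain ⟨hpos, n0, hper⟩ := hmem
  unfold salajanRho
  exact le_antisymm (Nat.sInf_le mem2r)
    (Nat.le_of_dvd hpos (hdvd_of_mem _ n0 hpos hper))

lemma nine_pow_two_pow (t : ℕ) : ∃ m : ℤ, Odd m ∧ (9:ℤ) ^ (2^t) = 1 + 2^(t+3) * m := by
  induction t with
  | zero => exact ⟨1, odd_one, by norm_num⟩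
  | succ t ih =>
    obtain ⟨m, hmo, hm⟩ := ih
    refine ⟨m + 2^(t+2) * m^2, ?_, ?_⟩
    · refine hmo.add_even (Even.mul_right ⟨2^(t+1), ?_⟩ _)
      rw [pow_succ]; ring
    · have h1 : (9:ℤ) ^ (2^(t+1)) = ((9:ℤ) ^ (2^t))^2 := by
        rw [← pow_mul]
        congr 1
      rw [h1, hm]
      ring

lemma ord9_two_pow (e : ℕ) (he : 1 ≤ e) : orderOf (9 : ZMod (2^(e+2))) = 2^(e-1) := by
  have haux : ∀ s : ℕ, ((9 : ZMod (2^(e+2))) ^ (2^s) = 1 ↔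
      ((2^(e+2) : ℕ) : ℤ) ∣ (9:ℤ)^(2^s) - 1) := by
    intro s
    constructor
    · intro h
      have h0 : (((9:ℤ)^(2^s) - 1 : ℤ) : ZMod (2^(e+2))) = 0 := by
        push_cast
        rw [h]
        ring
      exact (ZMod.intCast_zmod_eq_zero_iff_dvd _ _).mp h0
    · intro h
      have h0 : (((9:ℤ)^(2^s) - 1 : ℤ) : ZMod (2^(e+2))) = 0 :=
        (ZMod.intCast_zmod_eq_zero_iff_dvd _ _).mpr h
      push_cast at h0
      linear_combination h0
  have hdvd : orderOf (9 : ZMod (2^(e+2))) ∣ 2^(e-1) := by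
    apply orderOf_dvd_of_pow_eq_one
    rw [haux (e-1)]
    obtain ⟨m, hmo, hm⟩ := nine_pow_two_pow (e-1)
    refine ⟨m, ?_⟩
    rw [hm]
    push_cast
    rw [show e - 1 + 3 = e + 2 by omega]
    ring
  obtain ⟨s, hs, hval⟩ := (Nat.dvd_prime_pow Nat.prime_two).mp hdvd
  rw [hval]
  congr 1
  by_contra hne
  have hslt : s ≤ e - 2 := by omega
  have hone : (9 : ZMod (2^(e+2))) ^ (2^s) = 1 := by
    rw [← hval]; exact pow_orderOf_eq_one _
  rw [haux s] at hone
  obtain ⟨m, hmo, hm⟩ := nine_pow_two_pow s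
  rw [hm] at hone
  have h2 : (2:ℤ)^(s+3) * 2 ∣ (2:ℤ)^(s+3) * m := by
    have hle : ((2:ℤ)^(s+4)) ∣ ((2^(e+2) : ℕ) : ℤ) := by
      push_cast
      exact pow_dvd_pow 2 (by omega)
    have : ((2:ℤ)^(s+4)) ∣ 1 + 2^(s+3) * m - 1 := dvd_trans hle (by convert hone using 1)
    have h3 : (1 : ℤ) + 2^(s+3) * m - 1 = 2^(s+3) * m := by ring
    rw [h3] at this
    calc (2:ℤ)^(s+3) * 2 = 2^(s+4) := by ring
    _ ∣ 2^(s+3) * m := this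
  have h4 : (2:ℤ) ∣ m :=
    (mul_dvd_mul_iff_left (pow_ne_zero (s+3) (by norm_num : (2:ℤ) ≠ 0))).mp h2
  rw [Int.odd_iff] at hmo
  omega

lemma two_mul_ord_dvd_totient (p e : ℕ) (hp : p.Prime) (hpo : Odd p) (hp3 : p ≠ 3)
    (he : 1 ≤ e) : 2 * orderOf (9 : ZMod (4 * p ^ e)) ∣ Nat.totient (p ^ e) := by
  have hpe1 : 1 < p ^ e := Nat.one_lt_pow (by omega) hp.one_lt
  have hp2 : ¬ 2 ∣ p := by
    rw [Nat.odd_iff] at hpo; omega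
  have hcop2 : Nat.Coprime 2 p := (Nat.Prime.coprime_iff_not_dvd Nat.prime_two).mpr hp2
  have hcop4 : Nat.Coprime 4 (p ^ e) := by
    have h : Nat.Coprime (2 ^ 2) (p ^ e) := Nat.Coprime.pow _ _ hcop2
    norm_num at h
    exact h
  -- CRT : orderOf 9 mod 4p^e equals orderOf 9 mod p^e
  have h99 : (ZMod.chineseRemainder hcop4) (9 : ZMod (4 * p ^ e))
      = ((9 : ZMod 4), (9 : ZMod (p ^ e))) := by
    have h := map_natCast ((ZMod.chineseRemainder hcop4) : ZMod (4 * p ^ e) →+* ZMod 4 × ZMod (p ^ e)) (9 : ℕ)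
    have h2 : ((9 : ℕ) : ZMod 4 × ZMod (p ^ e)) = ((9 : ZMod 4), (9 : ZMod (p ^ e))) := by
      rfl
    rw [h2] at h
    rw [← h]
    norm_num
  have hord4 : orderOf (9 : ZMod 4) = 1 := by
    rw [show (9 : ZMod 4) = 1 by decide, orderOf_one]
  have hordeq : orderOf (9 : ZMod (4 * p ^ e)) = orderOf (9 : ZMod (p ^ e)) := by
    rw [← MulEquiv.orderOf_eq (ZMod.chineseRemainder hcop4).toMulEquiv (9 : ZMod (4 * p ^ e))]
    show orderOf ((ZMod.chineseRemainder hcop4) (9 : ZMod (4 * p ^ e))) = _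
    rw [h99, Prod.orderOf, hord4]
    simp
  rw [hordeq]
  -- now work mod p^e
  set R := orderOf (9 : ZMod (p ^ e)) with hR
  set T := orderOf (3 : ZMod (p ^ e)) with hT
  have hcop3 : Nat.Coprime 3 (p ^ e) :=
    Nat.Coprime.pow_right e (((Nat.coprime_primes (by norm_num) hp).mpr (Ne.symm hp3)))
  have hcast : ∀ a k : ℕ, a ^ k % (p ^ e) = 1 % (p ^ e) → ((a : ZMod (p ^ e)) ^ k = 1) := by
    intro a k h
    have h2 : ((a ^ k : ℕ) : ZMod (p ^ e)) = ((1 : ℕ) : ZMod (p ^ e)) :=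
      (ZMod.natCast_eq_natCast_iff _ _ _).mpr h
    push_cast at h2
    exact h2
  have htot3 : (3 : ZMod (p ^ e)) ^ Nat.totient (p ^ e) = 1 :=
    hcast 3 _ (Nat.ModEq.pow_totient hcop3)
  have hTtot : T ∣ Nat.totient (p ^ e) := orderOf_dvd_of_pow_eq_one htot3
  have h93 : (9 : ZMod (p ^ e)) = (3 : ZMod (p ^ e)) ^ 2 := by norm_num
  have hRT : R ∣ T := by
    apply orderOf_dvd_of_pow_eq_one
    rw [h93, ← pow_mul, mul_comm, pow_mul, pow_orderOf_eq_one, one_pow]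
  have hT2R : T ∣ 2 * R := by
    apply orderOf_dvd_of_pow_eq_one
    rw [pow_mul, ← h93, pow_orderOf_eq_one]
  have hR0 : 0 < R := by
    have htot9 : (9 : ZMod (p ^ e)) ^ Nat.totient (p ^ e) = 1 := by
      rw [h93, ← pow_mul, mul_comm, pow_mul, htot3, one_pow]
    rw [hR, orderOf_pos_iff]
    exact isOfFinOrder_iff_pow_eq_one.mpr
      ⟨_, Nat.totient_pos.mpr (by omega), htot9⟩
  obtain ⟨t, ht⟩ := hRT
  have ht2 : t ∣ 2 := by
    have h1 : R * t ∣ R * 2 := by rw [← ht]; rwa [mul_comm 2 R] at hT2R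
    exact (Nat.mul_dvd_mul_iff_left hR0).mp h1
  rcases (Nat.dvd_prime Nat.prime_two).mp ht2 with ht1 | ht2'
  · -- T = R, so 3^R = 1
    rw [ht1, mul_one] at ht
    have h3R : (3 : ZMod (p ^ e)) ^ R = 1 := by
      rw [← ht]; exact pow_orderOf_eq_one _
    rcases Nat.even_or_odd R with hRe | hRo
    · -- R even : contradiction
      exfalso
      obtain ⟨s, hs⟩ := hRe
      have h9s : (9 : ZMod (p ^ e)) ^ s = 1 := by
        rw [h93, ← pow_mul]
        rw [show 2 * s = R by omega]
        exact h3R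
      have := Nat.le_of_dvd (by omega) (orderOf_dvd_of_pow_eq_one h9s)
      omega
    · -- R odd
      have hodd : Odd (p ^ e) := hpo.pow
      rw [Nat.odd_iff] at hodd
      have h2tot : 2 ∣ Nat.totient (p ^ e) :=
        (Nat.totient_even (by omega)).two_dvd
      have hRtot : R ∣ Nat.totient (p ^ e) := ht ▸ hTtot
      have hcop2R : Nat.Coprime 2 R := hRo.coprime_two_left
      exact hcop2R.mul_dvd_of_dvd_of_dvd h2tot hRtot
  · -- T = 2R
    rw [ht2', mul_comm R 2] at ht
    rw [← ht]
    exact hTtot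

theorem salajan_period_properties (d : ℕ) (hd : 1 < d) (h9 : ¬ 9 ∣ d) (α δ : ℕ)
    (hδ : ¬ 3 ∣ δ) (hfact : d = 3 ^ α * δ) :
    (salajanRho d = 2 * orderOf (9 : ZMod (4 * δ)) ∧ Even (salajanRho d)) ∧
    (∀ e : ℕ, 1 ≤ e → salajanRho (2 ^ e) = 2 ^ e) ∧
    salajanRho 3 = 2 ∧
    (∀ p e : ℕ, p.Prime → Odd p → 1 ≤ e → salajanRho (p ^ e) ∣ Nat.totient (p ^ e)) := by
  refine ⟨⟨rho_eq d hd α δ hδ hfact, ?_⟩, ?_, ?_, ?_⟩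
  · rw [rho_eq d hd α δ hδ hfact]
    exact even_two_mul _
  · intro e he
    have h2e : 1 < 2 ^ e := Nat.one_lt_pow (by omega) (by norm_num)
    have h3 : ¬ 3 ∣ 2 ^ e := by
      intro h
      have := Nat.Prime.dvd_of_dvd_pow (by norm_num : Nat.Prime 3) h
      omega
    rw [rho_eq (2 ^ e) h2e 0 (2 ^ e) h3 (by ring)]
    rw [show 4 * 2 ^ e = 2 ^ (e + 2) by rw [pow_add]; ring]
    rw [ord9_two_pow e he, ← pow_succ']
    congr 1
    omega
  · rw [rho_eq 3 (by norm_num) 1 1 (by norm_num) (by norm_num)]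
    rw [show (9 : ZMod (4 * 1)) = 1 by decide, orderOf_one]
  · intro p e hp hpo he
    by_cases hp3 : p = 3
    · subst hp3
      have h1 : 1 < 3 ^ e := Nat.one_lt_pow (by omega) (by norm_num)
      rw [rho_eq (3 ^ e) h1 e 1 (by norm_num) (by rw [mul_one])]
      rw [show (9 : ZMod (4 * 1)) = 1 by decide, orderOf_one, mul_one]
      have h3e : 3 ≤ 3 ^ e := by
        calc 3 = 3 ^ 1 := by norm_num
        _ ≤ 3 ^ e := Nat.pow_le_pow_right (by norm_num) he
      exact (Nat.totient_even (by omega)).two_dvd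
    · have h1 : 1 < p ^ e := Nat.one_lt_pow (by omega) hp.one_lt
      have h3 : ¬ 3 ∣ p ^ e := by
        intro h
        exact hp3 (((Nat.prime_dvd_prime_iff_eq (by norm_num) hp).mp
          (Nat.Prime.dvd_of_dvd_pow (by norm_num) h)).symm)
      rw [rho_eq (p ^ e) h1 0 (p ^ e) h3 (by ring)]
      exact two_mul_ord_dvd_totient p e hp hpo hp3 he
end

section
/- Let p > 3 be a prime with p ≡ 3 (mod 4) such that the multiplicative order of 3 modulo p is p − 1. Then u_2 ≡ u_{(p−1)/2} (mod p); in particular the incongruence index ι(p) satisfies ι(p) ≤ (p−1)/2. -/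
/-- The incongruence index of the Salajan sequence modulo `m`: the largest `k` such
that `u 1, …, u k` are pairwise incongruent modulo `m`. -/
noncomputable def salajanIota (m : ℕ) : ℕ :=
  sSup {k : ℕ | ∀ i j : ℕ, 1 ≤ i → i < j → j ≤ k →
    ¬ (salajanU i ≡ salajanU j [ZMOD (m : ℤ)])}

theorem salajan_iota_P3 (p : ℕ) (hp : p.Prime) (hp3 : 3 < p) (hp4 : p % 4 = 3)
    (hord : orderOf (3 : ZMod p) = p - 1) :
    salajanU 2 ≡ salajanU ((p - 1) / 2) [ZMOD (p : ℤ)] ∧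
    salajanIota p ≤ (p - 1) / 2 := by
  haveI : Fact p.Prime := ⟨hp⟩
  set m := (p - 1) / 2 with hm
  have hp7 : 7 ≤ p := by omega
  have hm3 : 3 ≤ m := by omega
  have hmodd : Odd m := by
    refine ⟨(p - 3) / 4, by omega⟩
  have h2m : 2 * m = p - 1 := by omega
  -- (3 : ZMod p)^m = -1
  have hx : (3 : ZMod p) ^ m = -1 := by
    have hsq : (3 : ZMod p) ^ m * (3 : ZMod p) ^ m = 1 := by
      rw [← pow_add]
      have : m + m = p - 1 := by omega
      rw [this, ← hord, pow_orderOf_eq_one]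
    have := mul_self_eq_one_iff.mp hsq
    rcases this with h1 | h1
    · exfalso
      have hdvd : orderOf (3 : ZMod p) ∣ m := orderOf_dvd_of_pow_eq_one h1
      rw [hord] at hdvd
      have := Nat.le_of_dvd (by omega) hdvd
      omega
    · exact h1
  -- p ∣ 3^m + 1 in ℤ
  have hpdvd : (p : ℤ) ∣ (3 : ℤ) ^ m + 1 := by
    have : (((3 : ℤ) ^ m + 1 : ℤ) : ZMod p) = 0 := by
      push_cast
      rw [hx]; ring
    exact (ZMod.intCast_zmod_eq_zero_iff_dvd _ _).mp this
  -- 4 ∣ 3^m + 5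
  have h4dvd : (4 : ℤ) ∣ (3 : ℤ) ^ m + 5 := by
    have h3 : (3 : ℤ) ≡ -1 [ZMOD 4] := by decide
    have h := (h3.pow m)
    rw [hmodd.neg_one_pow] at h
    obtain ⟨c, hc⟩ := h.dvd
    exact ⟨-c + 1, by linarith⟩
  have hu2 : salajanU 2 = 1 := by norm_num [salajanU]
  have hum : salajanU m * 4 = (3 : ℤ) ^ m + 5 := by
    rw [salajanU, hmodd.neg_one_pow]
    have : (3 : ℤ) ^ m - 5 * (-1) = (3 : ℤ) ^ m + 5 := by ring
    rw [this]
    exact Int.ediv_mul_cancel h4dvd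
  have hcong : salajanU 2 ≡ salajanU m [ZMOD (p : ℤ)] := by
    rw [Int.modEq_iff_dvd]
    have hd4 : (p : ℤ) ∣ (salajanU m - salajanU 2) * 4 := by
      have : (salajanU m - salajanU 2) * 4 = (3 : ℤ) ^ m + 1 := by
        rw [hu2]; linarith [hum]
      rw [this]
      exact hpdvd
    have hpI : Prime (p : ℤ) := by exact_mod_cast Nat.prime_iff_prime_int.mp hp
    rcases hpI.dvd_mul.mp hd4 with h | h
    · exact h
    · exfalso
      have := Int.le_of_dvd (by norm_num) h
      omega
  refine ⟨hcong, ?_⟩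
  rw [salajanIota]
  apply csSup_le'
  rintro k hk
  by_contra hkm
  push_neg at hkm
  exact hk 2 m (by norm_num) (by omega) (by omega) hcong
end

section
/- Let G be a finite abelian group and A, B nonempty subsets of G with A ∩ (B + B) = ∅. Then |B| ≤ Â·|G| / (|A| + Â), where Â = max over nontrivial characters ψ of G of |∑_{a∈A} ψ(a)|. -/
open Finset Complex

theorem sumset_avoiding_bound (G : Type*) [AddCommGroup G] [Fintype G]
    (A B : Finset G) (hA : A.Nonempty) (hB : B.Nonempty)
    (hdisj : ∀ a ∈ A, ∀ b ∈ B, ∀ b' ∈ B, a ≠ b + b')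
    (Ahat : ℝ)
    (hAhat : IsGreatest
      {x : ℝ | ∃ ψ : AddChar G ℂ, ψ ≠ 1 ∧ x = ‖∑ a ∈ A, ψ a‖} Ahat) :
    (B.card : ℝ) ≤ Ahat * (Fintype.card G) / ((A.card : ℝ) + Ahat) := by
  classical
  set S : AddChar G ℂ → ℂ := fun ψ => ∑ a ∈ A, ψ a with hS
  set T : AddChar G ℂ → ℂ := fun ψ => ∑ b ∈ B, ψ (-b) with hT
  -- Key orthogonality identity: no solutions to a = b + b'
  have key : ∑ ψ : AddChar G ℂ, S ψ * T ψ ^ 2 = 0 := by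
    have h1 : ∀ ψ : AddChar G ℂ, S ψ * T ψ ^ 2
        = ∑ a ∈ A, ∑ b ∈ B, ∑ b' ∈ B, ψ (a - b - b') := by
      intro ψ
      rw [hS, Finset.sum_mul]
      refine Finset.sum_congr rfl fun a _ => ?_
      rw [hT, sq, Finset.sum_mul_sum, Finset.mul_sum]
      refine Finset.sum_congr rfl fun b _ => ?_
      rw [Finset.mul_sum]
      refine Finset.sum_congr rfl fun b' _ => ?_
      rw [show a - b - b' = a + -b + -b' by rw [sub_eq_add_neg, sub_eq_add_neg],
        AddChar.map_add_eq_mul,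
        AddChar.map_add_eq_mul, mul_assoc]
    calc ∑ ψ : AddChar G ℂ, S ψ * T ψ ^ 2
        = ∑ ψ : AddChar G ℂ, ∑ a ∈ A, ∑ b ∈ B, ∑ b' ∈ B, ψ (a - b - b') :=
          Finset.sum_congr rfl fun ψ _ => h1 ψ
      _ = ∑ a ∈ A, ∑ b ∈ B, ∑ b' ∈ B, ∑ ψ : AddChar G ℂ, ψ (a - b - b') := by
          rw [Finset.sum_comm]
          refine Finset.sum_congr rfl fun a _ => ?_
          rw [Finset.sum_comm]
          exact Finset.sum_congr rfl fun b _ => Finset.sum_comm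
      _ = 0 := by
          refine Finset.sum_eq_zero fun a ha => Finset.sum_eq_zero fun b hb =>
            Finset.sum_eq_zero fun b' hb' => ?_
          rw [AddChar.sum_apply_eq_ite, if_neg]
          intro h
          exact hdisj a ha b hb b' hb' (by rwa [sub_sub, sub_eq_zero] at h)
  -- Values at the trivial character
  have hS0 : S (0 : AddChar G ℂ) = (A.card : ℂ) := by simp [hS]
  have hT0 : T (0 : AddChar G ℂ) = (B.card : ℂ) := by simp [hT]
  have split : ∑ ψ ∈ Finset.univ.erase (0 : AddChar G ℂ), S ψ * T ψ ^ 2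
      = -((A.card : ℂ) * (B.card : ℂ) ^ 2) := by
    have h := Finset.add_sum_erase Finset.univ (fun ψ => S ψ * T ψ ^ 2)
      (Finset.mem_univ (0 : AddChar G ℂ))
    rw [key, hS0, hT0] at h
    linear_combination h
  -- Ahat is nonnegative and bounds |S ψ| for nontrivial ψ
  obtain ⟨ψ₀, hψ₀ne, hψ₀val⟩ := hAhat.1
  have hAhat0 : 0 ≤ Ahat := hψ₀val ▸ norm_nonneg _
  have hbound : ∀ ψ : AddChar G ℂ, ψ ≠ 0 → ‖S ψ‖ ≤ Ahat := by
    intro ψ hψ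
    exact hAhat.2 ⟨ψ, hψ, rfl⟩
  -- Parseval for B (complex version)
  have parsC : ∑ ψ : AddChar G ℂ, T ψ * (starRingEnd ℂ) (T ψ)
      = (Fintype.card G : ℂ) * (B.card : ℂ) := by
    have h1 : ∀ ψ : AddChar G ℂ, T ψ * (starRingEnd ℂ) (T ψ)
        = ∑ b ∈ B, ∑ b' ∈ B, ψ (b' - b) := by
      intro ψ
      rw [hT, map_sum, Finset.sum_mul_sum]
      refine Finset.sum_congr rfl fun b _ => Finset.sum_congr rfl fun b' _ => ?_
      have hc : (starRingEnd ℂ) (ψ (-b')) = ψ b' := by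
        rw [AddChar.map_neg_eq_conj, Complex.conj_conj]
      rw [hc, ← AddChar.map_add_eq_mul, neg_add_eq_sub]
    calc ∑ ψ : AddChar G ℂ, T ψ * (starRingEnd ℂ) (T ψ)
        = ∑ ψ : AddChar G ℂ, ∑ b ∈ B, ∑ b' ∈ B, ψ (b' - b) :=
          Finset.sum_congr rfl fun ψ _ => h1 ψ
      _ = ∑ b ∈ B, ∑ b' ∈ B, ∑ ψ : AddChar G ℂ, ψ (b' - b) := by
          rw [Finset.sum_comm]
          exact Finset.sum_congr rfl fun b _ => Finset.sum_comm
      _ = (Fintype.card G : ℂ) * (B.card : ℂ) := by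
          have : ∀ b ∈ B, ∑ b' ∈ B, ∑ ψ : AddChar G ℂ, ψ (b' - b)
              = (Fintype.card G : ℂ) := by
            intro b hb
            have : ∀ b' ∈ B, ∑ ψ : AddChar G ℂ, ψ (b' - b)
                = if b' = b then (Fintype.card G : ℂ) else 0 := by
              intro b' _
              rw [AddChar.sum_apply_eq_ite, sub_eq_zero]
            rw [Finset.sum_congr rfl this, Finset.sum_ite_eq' B b
              (fun _ => (Fintype.card G : ℂ)), if_pos hb]
          rw [Finset.sum_congr rfl this, Finset.sum_const, nsmul_eq_mul, mul_comm]
  -- Parseval (real version)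
  have parsR : ∑ ψ : AddChar G ℂ, (‖T ψ‖) ^ 2
      = (Fintype.card G : ℝ) * (B.card : ℝ) := by
    have h : ((∑ ψ : AddChar G ℂ, (‖T ψ‖) ^ 2 : ℝ) : ℂ)
        = ((Fintype.card G : ℝ) * (B.card : ℝ) : ℂ) := by
      push_cast
      rw [← parsC]
      refine Finset.sum_congr rfl fun ψ _ => ?_
      rw [Complex.mul_conj]
      norm_cast
      exact Complex.sq_norm _
    exact_mod_cast h
  -- Main estimate
  have habs : (A.card : ℝ) * (B.card : ℝ) ^ 2
      ≤ Ahat * ∑ ψ ∈ Finset.univ.erase (0 : AddChar G ℂ), (‖T ψ‖) ^ 2 := by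
    have h1 : (A.card : ℝ) * (B.card : ℝ) ^ 2
        = ‖∑ ψ ∈ Finset.univ.erase (0 : AddChar G ℂ), S ψ * T ψ ^ 2‖ := by
      rw [split]
      simp [map_mul, map_pow]
    rw [h1]
    calc ‖∑ ψ ∈ Finset.univ.erase (0 : AddChar G ℂ), S ψ * T ψ ^ 2‖
        ≤ ∑ ψ ∈ Finset.univ.erase (0 : AddChar G ℂ), ‖S ψ * T ψ ^ 2‖ :=
          norm_sum_le _ _
      _ ≤ ∑ ψ ∈ Finset.univ.erase (0 : AddChar G ℂ), Ahat * (‖T ψ‖) ^ 2 := by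
          refine Finset.sum_le_sum fun ψ hψ => ?_
          rw [norm_mul, norm_pow]
          exact mul_le_mul_of_nonneg_right
            (hbound ψ (Finset.ne_of_mem_erase hψ)) (by positivity)
      _ = Ahat * ∑ ψ ∈ Finset.univ.erase (0 : AddChar G ℂ), (‖T ψ‖) ^ 2 :=
          (Finset.mul_sum _ _ _).symm
  have hsum_erase : ∑ ψ ∈ Finset.univ.erase (0 : AddChar G ℂ), (‖T ψ‖) ^ 2
      = (Fintype.card G : ℝ) * (B.card : ℝ) - (B.card : ℝ) ^ 2 := by
    have h := Finset.add_sum_erase Finset.univ (fun ψ => (‖T ψ‖) ^ 2)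
      (Finset.mem_univ (0 : AddChar G ℂ))
    rw [parsR] at h
    have hT0abs : (‖T (0 : AddChar G ℂ)‖) ^ 2 = (B.card : ℝ) ^ 2 := by
      rw [hT0]
      simp
    rw [hT0abs] at h
    linarith
  rw [hsum_erase, mul_sub] at habs
  have hBpos : (0 : ℝ) < B.card := by exact_mod_cast hB.card_pos
  have hApos : (0 : ℝ) < A.card := by exact_mod_cast hA.card_pos
  have hdenom : (0 : ℝ) < (A.card : ℝ) + Ahat := by linarith
  rw [le_div_iff₀ hdenom]
  nlinarith [habs, hBpos, mul_pos hBpos hBpos]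
end
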